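/- Let i > 1 be an integer. Then the double integral ∫₀¹ ∫₀¹ 1/((x₁·x₂)^i + q) dx₂ dx₁ satisfies ∫₀¹ ∫₀¹ 1/((x₁·x₂)^i + q) dx₂ dx₁ = Θ(q^(−1 + 1/i)·(−log q)) as q → 0⁺. -/

import Mathlib

open MeasureTheory Filter Topology

/-- `I = Θ(R)` as `q → 0⁺`: there exist constants `0 < c ≤ C` and `q₀ > 0` such that
`c·R q ≤ I q ≤ C·R q` for all `0 < q < q₀`. -/
def IsThetaAtZero (I R : ℝ → ℝ) : Prop :=
  ∃ c C q₀ : ℝ, 0 < c ∧ c ≤ C ∧ 0 < q₀ ∧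
    ∀ q : ℝ, 0 < q → q < q₀ → c * R q ≤ I q ∧ I q ≤ C * R q

/-- Integrability of the inner integrand. -/
lemma inner_intble (i : ℕ) (q x1 a b : ℝ) (hq : 0 < q) (hx1 : 0 ≤ x1)
    (ha : 0 ≤ a) (hb : 0 ≤ b) :
    IntervalIntegrable (fun x2 : ℝ => 1 / ((x1 * x2) ^ i + q)) volume a b := by
  apply ContinuousOn.intervalIntegrable
  apply ContinuousOn.div continuousOn_const
  · exact (((continuous_const.mul continuous_id).pow i).continuousOn).add continuousOn_const
  · intro x hx
    have hx0 : 0 ≤ x := by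
      rcases Set.mem_uIcc.mp hx with h | h
      · linarith [h.1]
      · linarith [h.1]
    have : 0 < (x1 * x) ^ i + q := by positivity
    exact this.ne'

/-- The inner integral is nonnegative. -/
lemma inner_nonneg (i : ℕ) (q x1 : ℝ) (hq : 0 < q) (hx1 : 0 ≤ x1) :
    0 ≤ ∫ x2 in (0:ℝ)..1, 1 / ((x1 * x2) ^ i + q) := by
  apply intervalIntegral.integral_nonneg zero_le_one
  intro x hx
  have hx0 : 0 ≤ x := hx.1
  positivity

/-- The inner integral is at most `1/q`. -/
lemma inner_le (i : ℕ) (q x1 : ℝ) (hq : 0 < q) (hx1 : 0 ≤ x1) :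
    (∫ x2 in (0:ℝ)..1, 1 / ((x1 * x2) ^ i + q)) ≤ 1 / q := by
  have h := intervalIntegral.integral_mono_on zero_le_one
    (inner_intble i q x1 0 1 hq hx1 le_rfl zero_le_one)
    (intervalIntegrable_const (c := 1 / q))
    (fun x hx => by
      have hx0 : 0 ≤ x := hx.1
      apply one_div_le_one_div_of_le hq
      have : (0:ℝ) ≤ (x1 * x) ^ i := by positivity
      linarith)
  simpa using h

/-- Antitonicity of the inner integral in `x1`. -/
lemma inner_anti (i : ℕ) (q : ℝ) (hq : 0 < q) :
    AntitoneOn (fun x1 : ℝ => ∫ x2 in (0:ℝ)..1, 1 / ((x1 * x2) ^ i + q))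
      (Set.Icc (0:ℝ) 1) := by
  intro x hx y hy hxy
  apply intervalIntegral.integral_mono_on zero_le_one
    (inner_intble i q y 0 1 hq (hx.1.trans hxy) le_rfl zero_le_one)
    (inner_intble i q x 0 1 hq hx.1 le_rfl zero_le_one)
  intro z hz
  have hz0 : 0 ≤ z := hz.1
  have hx0 : 0 ≤ x := hx.1
  have hy0 : 0 ≤ y := hx0.trans hxy
  apply one_div_le_one_div_of_le
  · have : (0:ℝ) ≤ (x * z) ^ i := by positivity
    linarith
  · have : (x * z) ^ i ≤ (y * z) ^ i :=
      pow_le_pow_left₀ (by positivity) (mul_le_mul_of_nonneg_right hxy hz0) i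
    linarith

/-- Lower bound on the inner integral for `t ≤ x1 ≤ 1`, where `t^i = q`. -/
lemma inner_lower (i : ℕ) (q t x1 : ℝ) (hq : 0 < q) (ht : 0 < t) (hti : t ^ i = q)
    (hx1l : t ≤ x1) (hx1r : x1 ≤ 1) :
    (t / x1) * (1 / (2 * q)) ≤ ∫ x2 in (0:ℝ)..1, 1 / ((x1 * x2) ^ i + q) := by
  have hx10 : 0 < x1 := lt_of_lt_of_le ht hx1l
  set a := t / x1 with ha_def
  have ha0 : 0 < a := div_pos ht hx10
  have ha1 : a ≤ 1 := by rw [div_le_one hx10]; exact hx1l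
  have hsplit : (∫ x2 in (0:ℝ)..1, 1 / ((x1 * x2) ^ i + q))
      = (∫ x2 in (0:ℝ)..a, 1 / ((x1 * x2) ^ i + q))
        + ∫ x2 in a..1, 1 / ((x1 * x2) ^ i + q) :=
    (intervalIntegral.integral_add_adjacent_intervals
      (inner_intble i q x1 0 a hq hx10.le le_rfl ha0.le)
      (inner_intble i q x1 a 1 hq hx10.le ha0.le zero_le_one)).symm
  rw [hsplit]
  have h2 : (0:ℝ) ≤ ∫ x2 in a..1, 1 / ((x1 * x2) ^ i + q) := by
    apply intervalIntegral.integral_nonneg ha1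
    intro x hx
    have hx0 : 0 ≤ x := ha0.le.trans hx.1
    positivity
  have h1 : a * (1 / (2 * q)) ≤ ∫ x2 in (0:ℝ)..a, 1 / ((x1 * x2) ^ i + q) := by
    have h := intervalIntegral.integral_mono_on ha0.le
      (intervalIntegrable_const (c := 1 / (2 * q)))
      (inner_intble i q x1 0 a hq hx10.le le_rfl ha0.le)
      (fun x hx => by
        have hx0 : 0 ≤ x := hx.1
        have hxa : x ≤ a := hx.2
        apply one_div_le_one_div_of_le (by positivity)
        have hle : x1 * x ≤ t := by
          have : x1 * x ≤ x1 * a := by nlinarith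
          rw [ha_def] at this
          calc x1 * x ≤ x1 * (t / x1) := this
            _ = t := by field_simp
        have : (x1 * x) ^ i ≤ t ^ i := pow_le_pow_left₀ (by positivity) hle i
        rw [hti] at this
        linarith)
    rw [intervalIntegral.integral_const, smul_eq_mul, sub_zero] at h
    exact h
  linarith

/-- Upper bound on the inner integral for `t ≤ x1 ≤ 1`, where `t^i = q`. -/
lemma inner_upper (i : ℕ) (hi : 1 < i) (q t x1 : ℝ) (hq : 0 < q) (ht : 0 < t)
    (hti : t ^ i = q) (hx1l : t ≤ x1) (hx1r : x1 ≤ 1) :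
    (∫ x2 in (0:ℝ)..1, 1 / ((x1 * x2) ^ i + q))
      ≤ (t / q) * ((i : ℝ) / ((i : ℝ) - 1)) * (1 / x1) := by
  have hx10 : 0 < x1 := lt_of_lt_of_le ht hx1l
  have hi1 : (1:ℝ) < (i : ℝ) := by exact_mod_cast hi
  have hi0 : (0:ℝ) < (i : ℝ) - 1 := by linarith
  set a := t / x1 with ha_def
  have ha0 : 0 < a := div_pos ht hx10
  have ha1 : a ≤ 1 := by rw [div_le_one hx10]; exact hx1l
  have hsplit : (∫ x2 in (0:ℝ)..1, 1 / ((x1 * x2) ^ i + q))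
      = (∫ x2 in (0:ℝ)..a, 1 / ((x1 * x2) ^ i + q))
        + ∫ x2 in a..1, 1 / ((x1 * x2) ^ i + q) :=
    (intervalIntegral.integral_add_adjacent_intervals
      (inner_intble i q x1 0 a hq hx10.le le_rfl ha0.le)
      (inner_intble i q x1 a 1 hq hx10.le ha0.le zero_le_one)).symm
  rw [hsplit]
  -- first piece ≤ a/q
  have h1 : (∫ x2 in (0:ℝ)..a, 1 / ((x1 * x2) ^ i + q)) ≤ a * (1 / q) := by
    have h := intervalIntegral.integral_mono_on ha0.le
      (inner_intble i q x1 0 a hq hx10.le le_rfl ha0.le)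
      (intervalIntegrable_const (c := 1 / q))
      (fun x hx => by
        have hx0 : 0 ≤ x := hx.1
        apply one_div_le_one_div_of_le hq
        have : (0:ℝ) ≤ (x1 * x) ^ i := by positivity
        linarith)
    rw [intervalIntegral.integral_const, smul_eq_mul, sub_zero] at h
    exact h
  -- second piece: compare with x ^ (-i)
  have hzero : (0:ℝ) ∉ Set.uIcc a 1 := by
    rw [Set.uIcc_of_le ha1]
    intro h
    exact absurd h.1 (not_le.mpr ha0)
  have hzpow : IntervalIntegrable (fun x : ℝ => x ^ (-(i:ℤ))) volume a 1 := by
    apply ContinuousOn.intervalIntegrable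
    apply ContinuousOn.zpow₀ continuousOn_id
    intro x hx
    left
    intro h
    exact hzero (h ▸ hx)
  have h2 : (∫ x2 in a..1, 1 / ((x1 * x2) ^ i + q))
      ≤ (1 / x1 ^ i) * ∫ x2 in a..1, x2 ^ (-(i:ℤ)) := by
    rw [← intervalIntegral.integral_const_mul]
    apply intervalIntegral.integral_mono_on ha1
      (inner_intble i q x1 a 1 hq hx10.le ha0.le zero_le_one)
      (hzpow.const_mul _)
    intro x hx
    have hx0 : 0 < x := lt_of_lt_of_le ha0 hx.1
    have hpos : (0:ℝ) < (x1 * x) ^ i := by positivity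
    have : 1 / ((x1 * x) ^ i + q) ≤ 1 / (x1 * x) ^ i :=
      one_div_le_one_div_of_le hpos (by linarith)
    calc 1 / ((x1 * x) ^ i + q) ≤ 1 / (x1 * x) ^ i := this
      _ = 1 / x1 ^ i * x ^ (-(i:ℤ)) := by
          rw [zpow_neg, zpow_natCast]
          rw [mul_pow]
          field_simp
  have hval : (∫ x2 in a..1, x2 ^ (-(i:ℤ))) ≤ (a / a ^ i) / ((i:ℝ) - 1) := by
    have hA : a ^ (-(i:ℤ) + 1) = a / a ^ i := by
      rw [zpow_add₀ ha0.ne', zpow_neg, zpow_natCast, zpow_one]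
      field_simp
    have hone : ((1:ℝ)) ^ (-(i:ℤ) + 1) = 1 := one_zpow _
    rw [integral_zpow (Or.inr ⟨by omega, hzero⟩), hA, hone]
    push_cast
    rw [show -(i:ℝ) + 1 = -((i:ℝ) - 1) by ring, div_neg, ← neg_div, neg_sub]
    gcongr
    linarith [(by positivity : (0:ℝ) < a / a ^ i)]
  have h2' : (∫ x2 in a..1, 1 / ((x1 * x2) ^ i + q))
      ≤ (1 / x1 ^ i) * ((a / a ^ i) / ((i:ℝ) - 1)) := by
    calc (∫ x2 in a..1, 1 / ((x1 * x2) ^ i + q))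
        ≤ (1 / x1 ^ i) * ∫ x2 in a..1, x2 ^ (-(i:ℤ)) := h2
      _ ≤ (1 / x1 ^ i) * ((a / a ^ i) / ((i:ℝ) - 1)) := by
          apply mul_le_mul_of_nonneg_left hval (by positivity)
  -- now pure algebra
  have halg1 : a * (1 / q) = (t / q) * (1 / x1) := by
    rw [ha_def]; ring
  have ha_i : a ^ i = q / x1 ^ i := by rw [ha_def, div_pow, hti]
  have halg2 : (1 / x1 ^ i) * ((a / a ^ i) / ((i:ℝ) - 1))
      = (t / q) * (1 / ((i:ℝ) - 1)) * (1 / x1) := by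
    have hx1i : (x1 : ℝ) ^ i ≠ 0 := by positivity
    rw [ha_i, ha_def]
    field_simp
  have hfin : (t / q) * (1 / x1) + (t / q) * (1 / ((i:ℝ) - 1)) * (1 / x1)
      = (t / q) * ((i : ℝ) / ((i : ℝ) - 1)) * (1 / x1) := by
    field_simp
    ring
  calc (∫ x2 in (0:ℝ)..a, 1 / ((x1 * x2) ^ i + q))
        + (∫ x2 in a..1, 1 / ((x1 * x2) ^ i + q))
      ≤ a * (1 / q) + (1 / x1 ^ i) * ((a / a ^ i) / ((i:ℝ) - 1)) := by linarith
    _ = (t / q) * (1 / x1) + (t / q) * (1 / ((i:ℝ) - 1)) * (1 / x1) := by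
        rw [halg1, halg2]
    _ = (t / q) * ((i : ℝ) / ((i : ℝ) - 1)) * (1 / x1) := hfin

/-- Final algebraic estimate for the upper bound. -/
lemma final_alg (J B L : ℝ) (hJ : 1 < J) (hB : 0 < B) (hL : 1 ≤ L) :
    B + B * (J / (J - 1)) * (1 / J * L) ≤ J / (J - 1) * (B * L) := by
  have hJ0 : 0 < J := by linarith
  have hJ1 : 0 < J - 1 := by linarith
  have e1 : B * (J / (J - 1)) * (1 / J * L) = B * L / (J - 1) := by
    field_simp
  rw [e1, div_mul_eq_mul_div, le_div_iff₀ hJ1, add_mul, div_mul_cancel₀ _ (ne_of_gt hJ1)]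
  nlinarith [mul_nonneg (mul_nonneg hB.le hJ1.le) (sub_nonneg.mpr hL)]

/-- Theorem 4.3, Case 3: for an integer `i > 1`,
`∫₀¹ ∫₀¹ 1/((x₁·x₂)^i + q) dx₂ dx₁ = Θ(q^(−1 + 1/i)·(−log q))` as `q → 0⁺`. -/
theorem two_dim_monomial_scaling_equal_gt_one (i : ℕ) (hi : 1 < i) :
    IsThetaAtZero
      (fun q : ℝ => ∫ x₁ in (0:ℝ)..1, ∫ x₂ in (0:ℝ)..1, 1 / ((x₁ * x₂) ^ i + q))
      (fun q : ℝ => q ^ (-1 + 1/(i:ℝ)) * (-Real.log q)) := by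
  have hi1 : (1:ℝ) < (i : ℝ) := by exact_mod_cast hi
  have hi0 : (0:ℝ) < (i : ℝ) := by linarith
  have him1 : (0:ℝ) < (i : ℝ) - 1 := by linarith
  refine ⟨1 / (2 * i), (i : ℝ) / ((i : ℝ) - 1), Real.exp (-1), by positivity, ?_, Real.exp_pos _, ?_⟩
  · have h1 : 1 / (2 * (i:ℝ)) ≤ 1 := by
      rw [div_le_one (by positivity)]; linarith
    have h2 : (1:ℝ) ≤ (i : ℝ) / ((i : ℝ) - 1) := by
      rw [le_div_iff₀ him1]; linarith
    linarith
  intro q hq hq'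
  have hq1 : q < 1 := by
    have : Real.exp (-1) < 1 := Real.exp_lt_one_iff.mpr (by norm_num)
    linarith
  have hlogq : 1 ≤ -Real.log q := by
    have h := Real.log_lt_log hq hq'
    rw [Real.log_exp] at h
    linarith
  set t := q ^ ((1:ℝ) / i) with ht_def
  have ht0 : 0 < t := Real.rpow_pos_of_pos hq _
  have ht1 : t < 1 := Real.rpow_lt_one hq.le hq1 (by positivity)
  have hti : t ^ i = q := by
    rw [ht_def, ← Real.rpow_natCast (q ^ ((1:ℝ) / i)) i, ← Real.rpow_mul hq.le,
      one_div_mul_cancel (ne_of_gt hi0), Real.rpow_one]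
  have htq : q ^ (-1 + 1 / (i:ℝ)) = t / q := by
    rw [show (-1 + 1 / (i:ℝ)) = 1 / i - 1 by ring, Real.rpow_sub hq, Real.rpow_one, ht_def]
  have hlogt : Real.log t = (1 / i) * Real.log q := Real.log_rpow hq _
  set f := fun x1 : ℝ => ∫ x2 in (0:ℝ)..1, 1 / ((x1 * x2) ^ i + q) with hf_def
  have hanti : AntitoneOn f (Set.Icc (0:ℝ) 1) := inner_anti i q hq
  have hsub1 : Set.uIcc (0:ℝ) t ⊆ Set.Icc (0:ℝ) 1 := by
    rw [Set.uIcc_of_le ht0.le]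
    exact Set.Icc_subset_Icc le_rfl ht1.le
  have hsub2 : Set.uIcc t 1 ⊆ Set.Icc (0:ℝ) 1 := by
    rw [Set.uIcc_of_le ht1.le]
    exact Set.Icc_subset_Icc ht0.le le_rfl
  have hint1 : IntervalIntegrable f volume 0 t := (hanti.mono hsub1).intervalIntegrable
  have hint2 : IntervalIntegrable f volume t 1 := (hanti.mono hsub2).intervalIntegrable
  have hsplit : (∫ x1 in (0:ℝ)..1, f x1) = (∫ x1 in (0:ℝ)..t, f x1) + ∫ x1 in t..1, f x1 :=
    (intervalIntegral.integral_add_adjacent_intervals hint1 hint2).symm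
  have hginteg : IntervalIntegrable (fun x : ℝ => 1 / x) volume t 1 := by
    apply ContinuousOn.intervalIntegrable
    apply ContinuousOn.div continuousOn_const continuousOn_id
    intro x hx
    rw [Set.uIcc_of_le ht1.le] at hx
    exact ne_of_gt (lt_of_lt_of_le ht0 hx.1)
  have hlogint : (∫ x in t..1, (1:ℝ) / x) = -Real.log t := by
    rw [integral_one_div (by
      rw [Set.uIcc_of_le ht1.le]
      intro h
      exact absurd h.1 (not_le.mpr ht0))]
    rw [one_div, Real.log_inv]
  constructor
  · -- lower bound
    show 1 / (2 * i) * (q ^ (-1 + 1/(i:ℝ)) * (-Real.log q)) ≤ ∫ x1 in (0:ℝ)..1, f x1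
    have h0 : (0:ℝ) ≤ ∫ x1 in (0:ℝ)..t, f x1 := by
      apply intervalIntegral.integral_nonneg ht0.le
      intro x hx
      exact inner_nonneg i q x hq hx.1
    have hmono : (∫ x1 in t..1, (t / (2 * q)) * (1 / x1)) ≤ ∫ x1 in t..1, f x1 := by
      apply intervalIntegral.integral_mono_on ht1.le (hginteg.const_mul _) hint2
      intro x hx
      have h := inner_lower i q t x hq ht0 hti hx.1 hx.2
      calc (t / (2 * q)) * (1 / x) = (t / x) * (1 / (2 * q)) := by ring
        _ ≤ f x := h
    have hcomp : (∫ x1 in t..1, (t / (2 * q)) * (1 / x1)) = (t / (2 * q)) * (-Real.log t) := by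
      rw [intervalIntegral.integral_const_mul, hlogint]
    have heq : 1 / (2 * (i:ℝ)) * (q ^ (-1 + 1/(i:ℝ)) * (-Real.log q))
        = (t / (2 * q)) * (-Real.log t) := by
      rw [htq, hlogt]
      field_simp
    rw [hsplit, heq]
    rw [hcomp] at hmono
    linarith
  · -- upper bound
    show (∫ x1 in (0:ℝ)..1, f x1) ≤ (i:ℝ) / ((i:ℝ) - 1) * (q ^ (-1 + 1/(i:ℝ)) * (-Real.log q))
    have h1 : (∫ x1 in (0:ℝ)..t, f x1) ≤ t * (1 / q) := by
      have h := intervalIntegral.integral_mono_on ht0.le hint1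
        (intervalIntegrable_const (c := 1 / q))
        (fun x hx => inner_le i q x hq hx.1)
      rw [intervalIntegral.integral_const, smul_eq_mul, sub_zero] at h
      exact h
    have h2 : (∫ x1 in t..1, f x1)
        ≤ (t / q) * ((i:ℝ) / ((i:ℝ) - 1)) * (-Real.log t) := by
      have hmono : (∫ x1 in t..1, f x1)
          ≤ ∫ x1 in t..1, (t / q) * ((i:ℝ) / ((i:ℝ) - 1)) * (1 / x1) := by
        apply intervalIntegral.integral_mono_on ht1.le hint2 (hginteg.const_mul _)
        intro x hx
        exact inner_upper i hi q t x hq ht0 hti hx.1 hx.2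
      rw [intervalIntegral.integral_const_mul, hlogint] at hmono
      exact hmono
    have hBpos : (0:ℝ) < t / q := by positivity
    have hfinal : t * (1 / q) + (t / q) * ((i:ℝ) / ((i:ℝ) - 1)) * (-Real.log t)
        ≤ (i:ℝ) / ((i:ℝ) - 1) * (q ^ (-1 + 1/(i:ℝ)) * (-Real.log q)) := by
      rw [htq, hlogt]
      have h := final_alg (i:ℝ) (t / q) (-Real.log q) hi1 hBpos hlogq
      calc t * (1 / q) + t / q * ((i:ℝ) / ((i:ℝ) - 1)) * (-(1 / (i:ℝ) * Real.log q))
          = t / q + t / q * ((i:ℝ) / ((i:ℝ) - 1)) * (1 / (i:ℝ) * (-Real.log q)) := by ring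
        _ ≤ (i:ℝ) / ((i:ℝ) - 1) * (t / q * (-Real.log q)) := h
    rw [hsplit]
    linarith
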